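/- Let k ≥ 2 and let {t_n} be the 2k-nacci sequence. Then t_n is even if and only if n is divisible by 2k+1. -/

import Mathlib

theorem twoknacci_even_iff (k : ℕ) (hk : 2 ≤ k) (t : ℕ → ℕ)
    (h0 : t 0 = 0)
    (h1 : ∀ n, 1 ≤ n → n ≤ 2 * k - 1 → t n = 1)
    (hrec : ∀ n, 2 * k ≤ n → t n = ∑ i ∈ Finset.Icc 1 (2 * k), t (n - i)) :
    ∀ n : ℕ, Even (t n) ↔ (2 * k + 1) ∣ n := by
  set m := 2 * k + 1 with hm
  have key : ∀ n, t n % 2 = if n % m = 0 then 0 else 1 := by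
    intro n
    induction n using Nat.strong_induction_on with
    | _ n ih =>
      rcases Nat.lt_or_ge n (2 * k) with hn | hn
      · rcases Nat.eq_zero_or_pos n with h | h
        · subst h; simp [h0]
        · rw [h1 n h (by omega)]
          have hmod : n % m = n := Nat.mod_eq_of_lt (by omega)
          rw [hmod]
          have : n ≠ 0 := by omega
          simp [this]
      · rw [hrec n hn, Finset.sum_nat_mod]
        have hterm : ∀ i ∈ Finset.Icc 1 (2 * k),
            t (n - i) % 2 = if (n - i) % m = 0 then 0 else 1 := by
          intro i hi
          simp only [Finset.mem_Icc] at hi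
          exact ih (n - i) (by omega)
        rw [Finset.sum_congr rfl hterm]
        by_cases hdvd : n % m = 0
        · have hall : ∀ i ∈ Finset.Icc 1 (2 * k),
              (if (n - i) % m = 0 then (0 : ℕ) else 1) = 1 := by
            intro i hi
            simp only [Finset.mem_Icc] at hi
            have hne : (n - i) % m ≠ 0 := by
              intro h
              have hd1 : m ∣ n := Nat.dvd_of_mod_eq_zero hdvd
              have hd2 : m ∣ (n - i) := Nat.dvd_of_mod_eq_zero h
              have hdi : m ∣ i := by
                have hi' : i = n - (n - i) := by omega
                rw [hi']; exact Nat.dvd_sub hd1 hd2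
              have := Nat.le_of_dvd (by omega) hdi
              omega
            simp [hne]
          rw [Finset.sum_congr rfl hall, Finset.sum_const, Nat.card_Icc]
          simp only [hdvd, if_true, smul_eq_mul, mul_one]
          omega
        · set r := n % m with hr
          have hrlt : r < m := Nat.mod_lt _ (by omega)
          have hr1 : 1 ≤ r := by omega
          have hrmem : r ∈ Finset.Icc 1 (2 * k) := by
            simp only [Finset.mem_Icc]; omega
          have hdr : m ∣ (n - r) := by
            refine ⟨n / m, ?_⟩
            have := Nat.mod_add_div n m
            omega
          rw [← Finset.add_sum_erase _ _ hrmem]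
          have hz : (n - r) % m = 0 := by
            obtain ⟨c, hc⟩ := hdr
            rw [hc]; exact Nat.mul_mod_right m c
          rw [hz, if_pos rfl]
          have hrest : ∀ i ∈ (Finset.Icc 1 (2 * k)).erase r,
              (if (n - i) % m = 0 then (0 : ℕ) else 1) = 1 := by
            intro i hi
            rw [Finset.mem_erase, Finset.mem_Icc] at hi
            obtain ⟨hir, hi1, hi2⟩ := hi
            have hne : (n - i) % m ≠ 0 := by
              intro h
              have hd2 : m ∣ (n - i) := Nat.dvd_of_mod_eq_zero h
              rcases Nat.le_total i r with hle | hle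
              · have : m ∣ (r - i) := by
                  have heq : r - i = (n - i) - (n - r) := by omega
                  rw [heq]; exact Nat.dvd_sub hd2 hdr
                have := Nat.le_of_dvd (by omega) this
                omega
              · have : m ∣ (i - r) := by
                  have heq : i - r = (n - r) - (n - i) := by omega
                  rw [heq]; exact Nat.dvd_sub hdr hd2
                have := Nat.le_of_dvd (by omega) this
                omega
            simp [hne]
          rw [Finset.sum_congr rfl hrest, Finset.sum_const,
            Finset.card_erase_of_mem hrmem, Nat.card_Icc]
          simp only [smul_eq_mul, mul_one, if_neg hdvd]
          omega
  intro n
  have hiff : m ∣ n ↔ n % m = 0 := Nat.dvd_iff_mod_eq_zero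
  rw [Nat.even_iff, key n, hiff]
  by_cases h : n % m = 0 <;> simp [h]
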